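/- Let W be an n×n symmetric positive definite matrix, S an n×m matrix of full column rank, and G₁, G₂ two m×n matrices with G₁S = G₂S = I_m. If a random vector ε has mean zero and covariance V = W⁻¹, then the covariance of SGε, in the Loewner order, is minimized over all such G at G = (SᵀWS)⁻¹SᵀW; i.e., for every G with GS = I, S G V Gᵀ Sᵀ ⪰ S Ĝ V Ĝᵀ Sᵀ where Ĝ = (SᵀV⁻¹S)⁻¹SᵀV⁻¹, with ⪰ denoting that the difference is positive semidefinite. -/

import Mathlib

open Matrix

lemma mulVec_inj_of_rank {n m : ℕ} (S : Matrix (Fin n) (Fin m) ℝ) (hS : S.rank = m) :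
    Function.Injective S.mulVecLin := by
  rw [← LinearMap.ker_eq_bot, ← Submodule.finrank_eq_zero]
  have h := S.mulVecLin.finrank_range_add_finrank_ker
  rw [Module.finrank_pi] at h
  simp only [Fintype.card_fin] at h
  have hr : S.rank = Module.finrank ℝ (LinearMap.range S.mulVecLin) := rfl
  omega

lemma posdef_A {n m : ℕ} (S : Matrix (Fin n) (Fin m) ℝ) (hS : S.rank = m)
    (W : Matrix (Fin n) (Fin n) ℝ) (hW : W.PosDef) : (Sᵀ * W * S).PosDef := by
  have hWh : Wᵀ = W := hW.isHermitian
  rw [posDef_iff_dotProduct_mulVec]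
  constructor
  · show (Sᵀ * W * S)ᴴ = _
    rw [conjTranspose_eq_transpose_of_trivial, transpose_mul, transpose_mul,
      transpose_transpose, hWh, ← Matrix.mul_assoc]
  · intro x hx
    have hSx : S *ᵥ x ≠ 0 := fun h =>
      hx (mulVec_inj_of_rank S hS (by simpa [mulVecLin_apply] using h))
    have hpos := (posDef_iff_dotProduct_mulVec.mp hW).2 (x := S *ᵥ x) hSx
    have hsx : star x = x := funext fun _ => rfl
    have hsSx : star (S *ᵥ x) = S *ᵥ x := funext fun _ => rfl
    rw [hsx, ← Matrix.mulVec_mulVec, ← Matrix.mulVec_mulVec, dotProduct_mulVec,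
      vecMul_transpose]
    rwa [hsSx] at hpos

/-- MinT optimality: among all `G` with `G S = I`, the reconciled error covariance
`S G V Gᵀ Sᵀ` is minimized in the Loewner order at `Ĝ = (SᵀV⁻¹S)⁻¹SᵀV⁻¹`. -/
theorem stmt16 {n m : ℕ} (S : Matrix (Fin n) (Fin m) ℝ) (hS : S.rank = m)
    (V : Matrix (Fin n) (Fin n) ℝ) (hV : V.PosDef) :
    let Gh : Matrix (Fin m) (Fin n) ℝ := (Sᵀ * V⁻¹ * S)⁻¹ * Sᵀ * V⁻¹
    ∀ G : Matrix (Fin m) (Fin n) ℝ, G * S = 1 →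
      (S * G * V * Gᵀ * Sᵀ - S * Gh * V * Ghᵀ * Sᵀ).PosSemidef := by
  intro Gh G hG
  have hGh : Gh = (Sᵀ * V⁻¹ * S)⁻¹ * Sᵀ * V⁻¹ := rfl
  have hW : (V⁻¹).PosDef := hV.inv
  have hVh : Vᵀ = V := hV.isHermitian
  have hWh : (V⁻¹)ᵀ = V⁻¹ := hW.isHermitian
  have hA : (Sᵀ * V⁻¹ * S).PosDef := posdef_A S hS V⁻¹ hW
  have hAdet : IsUnit (Sᵀ * V⁻¹ * S).det := isUnit_iff_ne_zero.mpr hA.det_pos.ne'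
  have hVdet : IsUnit V.det := isUnit_iff_ne_zero.mpr hV.det_pos.ne'
  have hAinv' : (Sᵀ * V⁻¹ * S)⁻¹ * (Sᵀ * V⁻¹ * S) = 1 := nonsing_inv_mul _ hAdet
  have hWV : V⁻¹ * V = 1 := nonsing_inv_mul V hVdet
  have hAt : (Sᵀ * V⁻¹ * S)ᵀ = Sᵀ * V⁻¹ * S := by
    rw [transpose_mul, transpose_mul, transpose_transpose, hWh, ← Matrix.mul_assoc]
  have hAit : ((Sᵀ * V⁻¹ * S)⁻¹)ᵀ = (Sᵀ * V⁻¹ * S)⁻¹ := by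
    rw [transpose_nonsing_inv, hAt]
  -- Gh S = 1
  have hGhS : Gh * S = 1 := by
    rw [hGh]
    calc (Sᵀ * V⁻¹ * S)⁻¹ * Sᵀ * V⁻¹ * S
        = (Sᵀ * V⁻¹ * S)⁻¹ * (Sᵀ * V⁻¹ * S) := by simp only [Matrix.mul_assoc]
      _ = 1 := hAinv'
  -- Gh V = A⁻¹ Sᵀ
  have hGhV : Gh * V = (Sᵀ * V⁻¹ * S)⁻¹ * Sᵀ := by
    rw [hGh]
    calc (Sᵀ * V⁻¹ * S)⁻¹ * Sᵀ * V⁻¹ * V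
        = (Sᵀ * V⁻¹ * S)⁻¹ * (Sᵀ * (V⁻¹ * V)) := by simp only [Matrix.mul_assoc]
      _ = (Sᵀ * V⁻¹ * S)⁻¹ * Sᵀ := by rw [hWV, Matrix.mul_one]
  -- Gh V G'ᵀ = A⁻¹ for any G' with G' S = 1
  have key : ∀ G' : Matrix (Fin m) (Fin n) ℝ, G' * S = 1 →
      Gh * V * G'ᵀ = (Sᵀ * V⁻¹ * S)⁻¹ := by
    intro G' hG'
    rw [hGhV, Matrix.mul_assoc, ← transpose_mul, hG', transpose_one, Matrix.mul_one]
  have hGVGh : G * V * Ghᵀ = (Sᵀ * V⁻¹ * S)⁻¹ := by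
    have h := congrArg transpose (key G hG)
    rwa [transpose_mul, transpose_mul, transpose_transpose, hVh, hAit,
      ← Matrix.mul_assoc] at h
  have hGhVGh : Gh * V * Ghᵀ = (Sᵀ * V⁻¹ * S)⁻¹ := key Gh hGhS
  have expand : (G - Gh) * V * (G - Gh)ᵀ = G * V * Gᵀ - Gh * V * Ghᵀ := by
    rw [transpose_sub, Matrix.sub_mul, Matrix.sub_mul, Matrix.mul_sub, Matrix.mul_sub,
      hGVGh, key G hG, hGhVGh]
    abel
  have main : S * G * V * Gᵀ * Sᵀ - S * Gh * V * Ghᵀ * Sᵀ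
      = (S * (G - Gh)) * V * (S * (G - Gh))ᵀ := by
    calc S * G * V * Gᵀ * Sᵀ - S * Gh * V * Ghᵀ * Sᵀ
        = S * (G * V * Gᵀ) * Sᵀ - S * (Gh * V * Ghᵀ) * Sᵀ := by
          simp only [Matrix.mul_assoc]
      _ = S * (G * V * Gᵀ - Gh * V * Ghᵀ) * Sᵀ := by
          rw [Matrix.mul_sub, Matrix.sub_mul]
      _ = S * ((G - Gh) * V * (G - Gh)ᵀ) * Sᵀ := by rw [expand]
      _ = (S * (G - Gh)) * V * (S * (G - Gh))ᵀ := by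
          simp only [transpose_mul, Matrix.mul_assoc]
  rw [main]
  have h := hV.posSemidef.mul_mul_conjTranspose_same (S * (G - Gh))
  rwa [conjTranspose_eq_transpose_of_trivial] at h
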